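/- With V as above, V maps the canonical purification of σ_A to the canonical purification of σ_AB: V (σ_A^{1/2} ⊗ I_Â)|Γ⟩_{AÂ} = (σ_AB^{1/2} ⊗ I_{ÂB̂})|Γ⟩_{ABÂB̂}. -/

import Mathlib

open Matrix MeasureTheory
open scoped Kronecker ComplexOrder

open scoped Classical
noncomputable section

variable {n : Type*} [Fintype n] [DecidableEq n]

/-- positive semidefinite square root (total; junk value `0` off PSD matrices) -/
def msqrt (A : Matrix n n ℂ) : Matrix n n ℂ :=
  if h : A.PosSemidef then
    (h.1.eigenvectorUnitary : Matrix n n ℂ) *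
      Matrix.diagonal (fun i => ((Real.sqrt (h.1.eigenvalues i) : ℝ) : ℂ)) *
      (star h.1.eigenvectorUnitary : Matrix n n ℂ)
  else 0

/-- trace norm -/
def traceNorm (A : Matrix n n ℂ) : ℝ :=
  ((msqrt (Aᴴ * A)).trace).re

/-- Hilbert–Schmidt norm -/
def hsNorm (A : Matrix n n ℂ) : ℝ :=
  Real.sqrt ((Aᴴ * A).trace).re

/-- apply a scalar function via functional calculus (total) -/
def matFun (f : ℝ → ℝ) (A : Matrix n n ℂ) : Matrix n n ℂ :=
  if h : A.IsHermitian then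
    (h.eigenvectorUnitary : Matrix n n ℂ) *
      Matrix.diagonal (fun i => (f (h.eigenvalues i) : ℂ)) *
      (h.eigenvectorUnitary : Matrix n n ℂ)ᴴ
  else 0

def minEig (A : Matrix n n ℂ) : ℝ :=
  if h : A.IsHermitian then ⨅ i, h.eigenvalues i else 0

def minPosEig (A : Matrix n n ℂ) : ℝ :=
  if h : A.IsHermitian then sInf {x : ℝ | x ≠ 0 ∧ ∃ i, h.eigenvalues i = x} else 0

def opNorm {m : Type*} [Fintype m] (A : Matrix m n ℂ) : ℝ :=
  ‖LinearMap.toContinuousLinearMap (Matrix.toEuclideanLin A)‖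

variable {a b : Type*} [Fintype a] [DecidableEq a] [Fintype b] [DecidableEq b]

/-- partial trace over the second tensor factor -/
def ptraceB (M : Matrix (a × b) (a × b) ℂ) : Matrix a a ℂ :=
  Matrix.of fun i j => ∑ k : b, M (i, k) (j, k)

/-- Petz recovery map for `σ` and the partial trace over `B` -/
def petz (σ : Matrix (a × b) (a × b) ℂ) (X : Matrix a a ℂ) : Matrix (a × b) (a × b) ℂ :=
  msqrt σ * (((msqrt (ptraceB σ))⁻¹ * X * (msqrt (ptraceB σ))⁻¹) ⊗ₖ (1 : Matrix b b ℂ)) *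
    msqrt σ

/-- isometric extension of the Petz recovery channel -/
def petzV (σ : Matrix (a × b) (a × b) ℂ) : Matrix ((a × b) × (a × b)) (a × a) ℂ :=
  (msqrt σ ⊗ₖ (1 : Matrix (a × b) (a × b) ℂ)) *
    Matrix.of (fun p q =>
      (msqrt (ptraceB σ))⁻¹ p.1.1 q.1 *
        (if p.2.1 = q.2 ∧ p.1.2 = p.2.2 then 1 else 0))

/-- canonical purification of `σ`, as a vector indexed by `n × n` -/
def purif (σ : Matrix n n ℂ) : n × n → ℂ :=
  fun p => msqrt σ p.1 p.2

/-- Petz quasi-relative entropy `Q_f(ρ‖σ)` -/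
def Qf (f : ℝ → ℝ) (ρ σ : Matrix n n ℂ) : ℝ :=
  (dotProduct (star (purif σ)) ((matFun f (σ⁻¹ ⊗ₖ ρᵀ)) *ᵥ purif σ)).re

/-- operator convexity of `f` on `[0,∞)` (Loewner order stated via `PosSemidef` differences) -/
def OpConvexOn (f : ℝ → ℝ) : Prop :=
  ∀ (k : ℕ) (A B : Matrix (Fin k) (Fin k) ℂ), A.PosSemidef → B.PosSemidef →
    ∀ lam : ℝ, 0 ≤ lam → lam ≤ 1 →
      (((lam : ℂ) • matFun f A + ((1 - lam : ℝ) : ℂ) • matFun f B)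
        - matFun f ((lam : ℂ) • A + ((1 - lam : ℝ) : ℂ) • B)).PosSemidef

end

open Classical
variable {n : Type*} [Fintype n] [DecidableEq n]
variable {a b : Type*} [Fintype a] [DecidableEq a] [Fintype b] [DecidableEq b]


open scoped ComplexOrder in
theorem ptraceB_posDef [Nonempty b] {σ : Matrix (a × b) (a × b) ℂ} (hσ : σ.PosDef) :
    (ptraceB σ).PosDef := by
  rw [Matrix.posDef_iff_dotProduct_mulVec]
  constructor
  · ext i j
    simp only [ptraceB, Matrix.conjTranspose_apply, Matrix.of_apply, star_sum]
    refine Finset.sum_congr rfl fun k _ => ?_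
    have := congrFun (congrFun hσ.1 (i, k)) (j, k)
    simpa [Matrix.conjTranspose_apply] using this
  · intro x hx
    have key : dotProduct (star x) (ptraceB σ *ᵥ x) =
        ∑ k : b, dotProduct (star (fun p : a × b => if p.2 = k then x p.1 else 0))
          (σ *ᵥ (fun p : a × b => if p.2 = k then x p.1 else 0)) := by
      simp only [dotProduct, mulVec, dotProduct, ptraceB, Matrix.of_apply, Pi.star_apply,
        Fintype.sum_prod_type, apply_ite, star_zero, mul_ite, ite_mul, mul_zero, zero_mul,
        Finset.sum_ite_eq, Finset.sum_ite_eq', Finset.mem_univ, if_true, Finset.mul_sum,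
        Finset.sum_mul, Finset.sum_ite_irrel, Finset.sum_const_zero]
      trans (∑ i : a, ∑ k : b, ∑ j : a, star (x i) * (σ (i,k) (j,k) * x j))
      · exact Finset.sum_congr rfl fun i _ => Finset.sum_comm
      · exact Finset.sum_comm
    rw [key]
    have hne : ∀ k : b, (fun p : a × b => if p.2 = k then x p.1 else 0) ≠ 0 := by
      intro k h
      apply hx
      funext i
      have := congrFun h (i, k)
      simpa using this
    exact Finset.sum_pos (fun k _ => hσ.dotProduct_mulVec_pos (hne k)) Finset.univ_nonempty

/-- `V` maps the canonical purification of `σ_A` to the canonical purification of `σ_AB`. -/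
theorem petzV_purif (σ : Matrix (a × b) (a × b) ℂ) (hσ : σ.PosDef) :
    petzV σ *ᵥ purif (ptraceB σ) = purif σ := by
  funext p
  obtain ⟨x, y⟩ := p
  have : Nonempty b := ⟨y.2⟩
  have hA : (ptraceB σ).PosDef := ptraceB_posDef hσ
  have hsq : msqrt (ptraceB σ) = (hA.posSemidef.1.eigenvectorUnitary : Matrix a a ℂ) *
      Matrix.diagonal (fun i => ((Real.sqrt (hA.posSemidef.1.eigenvalues i) : ℝ) : ℂ)) *
      (star hA.posSemidef.1.eigenvectorUnitary : Matrix a a ℂ) := dif_pos hA.posSemidef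
  have hdet : IsUnit (msqrt (ptraceB σ)).det := by
    have h1 : msqrt (ptraceB σ) * msqrt (ptraceB σ) = ptraceB σ := by
      rw [hsq]
      conv_rhs => rw [hA.posSemidef.1.spectral_theorem, Unitary.conjStarAlgAut_apply]
      have hu : (star hA.posSemidef.1.eigenvectorUnitary : Matrix a a ℂ) *
          (hA.posSemidef.1.eigenvectorUnitary : Matrix a a ℂ) = 1 := Unitary.coe_star_mul_self _
      have hd : Matrix.diagonal (fun i => ((Real.sqrt (hA.posSemidef.1.eigenvalues i) : ℝ) : ℂ)) *
          Matrix.diagonal (fun i => ((Real.sqrt (hA.posSemidef.1.eigenvalues i) : ℝ) : ℂ)) =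
          Matrix.diagonal (RCLike.ofReal ∘ hA.posSemidef.1.eigenvalues) := by
        rw [Matrix.diagonal_mul_diagonal]
        congr 1; funext i
        simp only [Function.comp_apply, ← Complex.ofReal_mul]
        rw [Real.mul_self_sqrt (hA.eigenvalues_pos i).le]; rfl
      simp only [mul_assoc]
      rw [← mul_assoc (star _ : Matrix a a ℂ), hu, one_mul, ← mul_assoc (Matrix.diagonal _), hd]
    have h2 : (msqrt (ptraceB σ)).det * (msqrt (ptraceB σ)).det = (ptraceB σ).det := by
      rw [← Matrix.det_mul, h1]
    have h3 : (ptraceB σ).det ≠ 0 := hA.det_pos.ne'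
    exact isUnit_iff_ne_zero.mpr (fun h => h3 (by rw [← h2, h, mul_zero]))
  have hinv : (msqrt (ptraceB σ))⁻¹ * msqrt (ptraceB σ) = 1 := Matrix.nonsing_inv_mul _ hdet
  have hP : petzV σ = Matrix.of fun i j => ∑ k, (msqrt σ ⊗ₖ (1 : Matrix (a × b) (a × b) ℂ)) i k *
      (Matrix.of (fun p q => (msqrt (ptraceB σ))⁻¹ p.1.1 q.1 *
        (if p.2.1 = q.2 ∧ p.1.2 = p.2.2 then 1 else 0)) : Matrix ((a × b) × (a × b)) (a × a) ℂ) k j := by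
    ext i j; rfl
  rw [hP]
  simp only [petzV, purif, mulVec, dotProduct, Matrix.mul_apply, Matrix.kroneckerMap_apply,
    Matrix.one_apply, Matrix.of_apply, Fintype.sum_prod_type, ite_and, mul_ite, ite_mul,
    mul_zero, zero_mul, mul_one, one_mul, Finset.sum_ite_irrel, Finset.sum_const_zero,
    Finset.sum_ite_eq, Finset.sum_ite_eq', Finset.mem_univ, if_true, Prod.mk.injEq]
  simp only [Prod.ext_iff, ite_and, mul_ite, ite_mul, mul_zero, zero_mul,
    Finset.sum_ite_irrel, Finset.sum_const_zero, Finset.sum_ite_eq, Finset.sum_ite_eq',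
    Finset.mem_univ, if_true]
  have hone : ∀ s : a, ∑ q : a, (msqrt (ptraceB σ))⁻¹ s q * msqrt (ptraceB σ) q y.1
      = (1 : Matrix a a ℂ) s y.1 := fun s => by rw [← Matrix.mul_apply, hinv]
  calc ∑ x_1 : a, (∑ x_2 : a, msqrt σ x (x_2, y.2) * (msqrt (ptraceB σ))⁻¹ x_2 x_1) *
          msqrt (ptraceB σ) x_1 y.1
      = ∑ x_2 : a, msqrt σ x (x_2, y.2) *
          ∑ x_1 : a, (msqrt (ptraceB σ))⁻¹ x_2 x_1 * msqrt (ptraceB σ) x_1 y.1 := by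
        simp only [Finset.sum_mul, Finset.mul_sum, mul_assoc]
        exact Finset.sum_comm
    _ = ∑ x_2 : a, msqrt σ x (x_2, y.2) * (1 : Matrix a a ℂ) x_2 y.1 := by
        simp only [hone]
    _ = msqrt σ x y := by
        simp [Matrix.one_apply]
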